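/- The polynomial p(z) = (3z+1)⁴(3z−4)/128 + 1 is a Shabat polynomial in Zapponi form: every critical value of p lies in {1, −1} (explicitly, its critical points are −1/3 and 1, with p(−1/3) = 1 and p(1) = −1), the sum of the distinct complex roots of p − 1 equals 1, and the sum of the distinct complex roots of p + 1 equals −1. -/

import Mathlib

open Polynomial

/-- The polynomial `p(z) = (3z+1)⁴(3z−4)/128 + 1`. -/
noncomputable def pSZ : Polynomial ℂ :=
  Polynomial.C (1 / 128 : ℂ) * (3 * Polynomial.X + 1) ^ 4 * (3 * Polynomial.X - 4) + 1


noncomputable def Mcub : Polynomial ℂ :=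
  X ^ 3 + C (2:ℂ) * X ^ 2 + C (17/9 : ℂ) * X + C (28/27 : ℂ)

lemma fact1 : pSZ - 1 = C (243/128 : ℂ) * ((X - C (-1/3 : ℂ)) ^ 4 * (X - C (4/3 : ℂ))) := by
  apply Polynomial.funext
  intro x
  simp [pSZ]
  ring

lemma fact2 : pSZ + 1 = C (243/128 : ℂ) * ((X - C (1 : ℂ)) ^ 2 * Mcub) := by
  apply Polynomial.funext
  intro x
  simp [pSZ, Mcub]
  ring

lemma deriv_eval (z : ℂ) : (Polynomial.derivative pSZ).eval z
    = 45/128 * ((3*z+1)^3 * (z-1)) := by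
  simp [pSZ, derivative_mul, derivative_pow]
  ring

lemma Mcub_monic : Mcub.Monic := by
  unfold Mcub; monicity!

lemma Mcub_natDegree : Mcub.natDegree = 3 := by
  unfold Mcub; compute_degree!

lemma Mcub_nextCoeff : Mcub.nextCoeff = 2 := by
  rw [nextCoeff, Mcub_natDegree]
  simp [Mcub, coeff_one]

lemma Mcub_sep : Mcub.Separable := by
  refine ⟨C (-9/320 : ℂ) * (81 * X - 27), C (9/320 : ℂ) * (27 * X ^ 2 + 9 * X + 4), ?_⟩
  apply Polynomial.funext
  intro x
  simp [Mcub, derivative_add, derivative_mul]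
  ring

lemma Mcub_roots_sum : Mcub.roots.sum = -2 := by
  have h := (IsAlgClosed.splits Mcub).nextCoeff_eq_neg_sum_roots_of_monic Mcub_monic
  rw [Mcub_nextCoeff] at h
  linear_combination h

lemma one_not_root : (1:ℂ) ∉ Mcub.roots := by
  rw [mem_roots (Mcub_monic.ne_zero)]
  intro h
  simp [Mcub, IsRoot] at h
  norm_num at h

lemma sum_m1 : ((pSZ - 1).roots.toFinset.sum id) = 1 := by
  rw [fact1, roots_C_mul _ (by norm_num), roots_mul (by
      exact mul_ne_zero (pow_ne_zero _ (X_sub_C_ne_zero _)) (X_sub_C_ne_zero _)),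
    roots_pow, roots_X_sub_C, roots_X_sub_C]
  have hne : (-1/3 : ℂ) ≠ 4/3 := by norm_num
  rw [Multiset.toFinset_add, Multiset.toFinset_nsmul _ 4 (by norm_num),
    Multiset.toFinset_singleton, Multiset.toFinset_singleton,
    ← Finset.insert_eq, Finset.sum_insert (by simp [hne]), Finset.sum_singleton]
  norm_num

lemma sum_p1 : ((pSZ + 1).roots.toFinset.sum id) = -1 := by
  have hnodup := nodup_roots Mcub_sep
  rw [fact2, roots_C_mul _ (by norm_num), roots_mul (by
      exact mul_ne_zero (pow_ne_zero _ (X_sub_C_ne_zero _)) Mcub_monic.ne_zero),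
    roots_pow, roots_X_sub_C]
  rw [Multiset.toFinset_add, Multiset.toFinset_nsmul _ 2 (by norm_num),
    Multiset.toFinset_singleton, ← Finset.insert_eq,
    Finset.sum_insert (by simpa using one_not_root)]
  have : Mcub.roots.toFinset.sum id = Mcub.roots.sum := by
    rw [Finset.sum, Multiset.toFinset_val, Multiset.dedup_eq_self.mpr hnodup,
      Multiset.map_id]
  rw [id, this, Mcub_roots_sum]
  norm_num

lemma deriv_iff (z : ℂ) : (Polynomial.derivative pSZ).eval z = 0 ↔ z = -1/3 ∨ z = 1 := by
  rw [deriv_eval]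
  constructor
  · intro h
    rcases mul_eq_zero.mp h with h | h
    · norm_num at h
    rcases mul_eq_zero.mp h with h | h
    · left
      have := pow_eq_zero_iff (n := 3) (by norm_num) |>.mp h
      linear_combination this / 3
    · right; linear_combination h
  · rintro (rfl | rfl) <;> norm_num

/-- `p(z) = (3z+1)⁴(3z−4)/128 + 1` is a Shabat polynomial in Zapponi form: its
critical points are `-1/3` and `1` with `p(-1/3) = 1` and `p(1) = -1`, every
critical value lies in `{1, -1}`, and the sums of the distinct roots of `p - 1`
and `p + 1` are `1` and `-1` respectively. -/
theorem pSZ_is_shabat_zapponi :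
    (∀ z : ℂ, (Polynomial.derivative pSZ).eval z = 0 ↔ z = -1/3 ∨ z = 1) ∧
    pSZ.eval (-1/3 : ℂ) = 1 ∧ pSZ.eval (1 : ℂ) = -1 ∧
    (∀ z : ℂ, (Polynomial.derivative pSZ).eval z = 0 →
      pSZ.eval z = 1 ∨ pSZ.eval z = -1) ∧
    ((pSZ - 1).roots.toFinset.sum id) = 1 ∧
    ((pSZ + 1).roots.toFinset.sum id) = -1 := by
  have e1 : pSZ.eval (-1/3 : ℂ) = 1 := by simp [pSZ]; norm_num
  have e2 : pSZ.eval (1 : ℂ) = -1 := by simp [pSZ]; norm_num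
  refine ⟨deriv_iff, e1, e2, ?_, sum_m1, sum_p1⟩
  intro z hz
  rcases (deriv_iff z).mp hz with rfl | rfl
  · exact Or.inl e1
  · exact Or.inr e2
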